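/- Let A be an n×m matrix defining a zero-sum game with value v, first column c_1 = v·1_n, and let v_{-1} be the value of the game A_{-1} (first column removed). If v_{-1} > v, then the unique equilibrium strategy of Player 2 is the pure strategy e_1: i.e., every y* ∈ S_m with max_{j∈[n]} (r_j)^T y* = v (where r_j are the rows of A) satisfies y* = e_1. -/
import Mathlib


/-- Payoff of Player 2's mixed strategy `y` against Player 1's pure action `j`
(the `j`-th row of `A` dotted with `y`). -/
noncomputable def rowPay {n m : ℕ} (A : Matrix (Fin n) (Fin m) ℝ) (j : Fin n)
    (y : Fin m → ℝ) : ℝ := ∑ i, A j i * y i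

/-- `max_j (r_j)^T y`. -/
noncomputable def maxPay {n m : ℕ} (A : Matrix (Fin (n + 1)) (Fin m) ℝ)
    (y : Fin m → ℝ) : ℝ :=
  Finset.univ.sup' Finset.univ_nonempty fun j => rowPay A j y

/-- `max_j (r_j)_{-1}^T ȳ` in the reduced game with the first column deleted. -/
noncomputable def maxPayRed {n m : ℕ} (A : Matrix (Fin (n + 1)) (Fin (m + 2)) ℝ)
    (y : Fin (m + 1) → ℝ) : ℝ :=
  Finset.univ.sup' Finset.univ_nonempty fun j => ∑ i : Fin (m + 1), A j i.succ * y i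

theorem stmt6 {n m : ℕ} (A : Matrix (Fin (n + 1)) (Fin (m + 2)) ℝ) (v vneg1 : ℝ)
    -- the first column is v·1_n, where v is the value of A
    (hc1 : ∀ j, A j 0 = v)
    (hlb : ∀ y ∈ stdSimplex ℝ (Fin (m + 2)), v ≤ maxPay A y)
    (hach : ∃ y ∈ stdSimplex ℝ (Fin (m + 2)), maxPay A y = v)
    -- vneg1 is the value of the reduced game A_{-1}
    (hlb1 : ∀ y ∈ stdSimplex ℝ (Fin (m + 1)), vneg1 ≤ maxPayRed A y)
    (hach1 : ∃ y ∈ stdSimplex ℝ (Fin (m + 1)), maxPayRed A y = vneg1)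
    (hlt : v < vneg1) :
    ∀ ystar ∈ stdSimplex ℝ (Fin (m + 2)), maxPay A ystar = v →
      ystar = Pi.single (0 : Fin (m + 2)) (1 : ℝ) := by
  rintro ystar ⟨hpos, hsum⟩ hmax
  set α := ystar 0 with hα
  have hsplit := Fin.sum_univ_succ ystar
  rw [hsum] at hsplit
  have htail : ∑ i : Fin (m + 1), ystar i.succ = 1 - α := by
    rw [hα]; linarith
  by_cases hα1 : α = 1
  · -- tail is zero
    have hz : ∀ i : Fin (m + 1), ystar i.succ = 0 := by
      intro i
      have h0 : ∑ i : Fin (m + 1), ystar i.succ = 0 := by rw [htail, hα1]; ring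
      have := Finset.sum_eq_zero_iff_of_nonneg (fun i _ => hpos i.succ) |>.mp h0
      exact this i (Finset.mem_univ i)
    funext i
    rcases Fin.eq_zero_or_eq_succ i with rfl | ⟨k, rfl⟩
    · simp [Pi.single_eq_same, ← hα, hα1]
    · rw [hz k, Pi.single_eq_of_ne (Fin.succ_ne_zero k)]
  · -- α < 1, derive contradiction
    exfalso
    have hαle : α ≤ 1 := by
      have : ∑ i : Fin (m + 1), ystar i.succ ≥ 0 :=
        Finset.sum_nonneg fun i _ => hpos i.succ
      linarith
    have hαlt : α < 1 := lt_of_le_of_ne hαle hα1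
    have hpos1 : (0:ℝ) < 1 - α := by linarith
    set yb : Fin (m + 1) → ℝ := fun i => ystar i.succ / (1 - α) with hyb
    have hybmem : yb ∈ stdSimplex ℝ (Fin (m + 1)) := by
      constructor
      · intro i
        exact div_nonneg (hpos i.succ) (le_of_lt hpos1)
      · rw [← Finset.sum_div, htail, div_self (ne_of_gt hpos1)]
    have hred : vneg1 ≤ maxPayRed A yb := hlb1 yb hybmem
    obtain ⟨j0, _, hj0⟩ := Finset.exists_mem_eq_sup' Finset.univ_nonempty
      (fun j => ∑ i : Fin (m + 1), A j i.succ * yb i)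
    have hrow : rowPay A j0 ystar = v * α + (1 - α) * maxPayRed A yb := by
      rw [rowPay, Fin.sum_univ_succ, hc1, maxPayRed, hj0, Finset.mul_sum, ← hα]
      congr 1
      apply Finset.sum_congr rfl
      intro i _
      rw [hyb]
      field_simp
    have hle : rowPay A j0 ystar ≤ maxPay A ystar :=
      Finset.le_sup' (fun j => rowPay A j ystar) (Finset.mem_univ j0)
    have hkey : v * α + (1 - α) * vneg1 ≤ v :=
      calc v * α + (1 - α) * vneg1 ≤ v * α + (1 - α) * maxPayRed A yb := by nlinarith
        _ = rowPay A j0 ystar := hrow.symm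
        _ ≤ maxPay A ystar := hle
        _ = v := hmax
    nlinarith
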